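/- Consider the Recursive Walk: ADDRESS(i,σ) moves to τ ∈ A(i,σ), then while some flaw in U(τ) ∩ Γ_R(f_i) is present, recursively calls ADDRESS on the greatest such flaw. If the invocation ADDRESS(i,σ) returns at state τ, then U(τ) ⊆ U(σ) ∖ (Γ_R(f_i) ∪ {f_i}), i.e., every flaw present at τ was present at σ and lies outside Γ_R(f_i) ∪ {f_i}. -/
import Mathlib


universe u v

mutual
  /-- `RecAddr f A Γ i σ τ` models an invocation `ADDRESS(i,σ)` of the Recursive Walk that
  returns at state `τ`: it moves to some `τ₀ ∈ A i σ` and then, while some flaw of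
  `Γ(f_i)` is present, recursively addresses the greatest such flaw. -/
  inductive RecAddr {ι : Type u} {Ω : Type v} [LinearOrder ι]
      (f : ι → Set Ω) (A : ι → Ω → Set Ω) (Γ : ι → Set ι) : ι → Ω → Ω → Prop
    | step {i : ι} {σ τ₀ τ : Ω} : σ ∈ f i → τ₀ ∈ A i σ →
        RecLoop f A Γ i τ₀ τ → RecAddr f A Γ i σ τ
  /-- The while-loop of `ADDRESS(i,·)`: from state `σ` it returns `σ` if no flaw of
  `Γ i` is present, and otherwise recursively addresses the greatest present flaw of
  `Γ i` and continues. -/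
  inductive RecLoop {ι : Type u} {Ω : Type v} [LinearOrder ι]
      (f : ι → Set Ω) (A : ι → Ω → Set Ω) (Γ : ι → Set ι) : ι → Ω → Ω → Prop
    | done {i : ι} {σ : Ω} : (∀ j, σ ∈ f j → j ∉ Γ i) → RecLoop f A Γ i σ σ
    | more {i j : ι} {σ σ' τ : Ω} : σ ∈ f j → j ∈ Γ i →
        (∀ k, σ ∈ f k → k ∈ Γ i → k ≤ j) →
        RecAddr f A Γ j σ σ' → RecLoop f A Γ i σ' τ → RecLoop f A Γ i σ τ
end

/-- If `Γ ⊇` the (potential) causality digraph — i.e. whenever a transition addressing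
`f i` leads from `σ` to `τ` and `f j` is present at `τ` with `j = i` or `f j` absent at
`σ`, then `j ∈ Γ i` — and the invocation `ADDRESS(i,σ)` returns at `τ`, then every flaw
present at `τ` was present at `σ` and lies outside `Γ(f_i) ∪ {f_i}`. -/
theorem stmt_11 {ι : Type u} {Ω : Type v} [LinearOrder ι]
    (f : ι → Set Ω) (A : ι → Ω → Set Ω) (Γ : ι → Set ι)
    (hC : ∀ i σ τ, σ ∈ f i → τ ∈ A i σ → ∀ j, τ ∈ f j → (j = i ∨ σ ∉ f j) → j ∈ Γ i)
    {i : ι} {σ τ : Ω} (h : RecAddr f A Γ i σ τ) :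
    ∀ j, τ ∈ f j → σ ∈ f j ∧ j ∉ Γ i ∧ j ≠ i := by
  induction h using RecAddr.rec
    (motive_2 := fun i σ τ _ => ∀ j, τ ∈ f j → σ ∈ f j ∧ j ∉ Γ i) with
  | @step i' σ' τ₀ τ' hσ hτ₀ _ ih =>
    intro j hj
    obtain ⟨hj₀, hjΓ⟩ := ih j hj
    have hσj : σ' ∈ f j := by
      by_contra hσj
      exact hjΓ (hC i' σ' τ₀ hσ hτ₀ j hj₀ (Or.inr hσj))
    refine ⟨hσj, hjΓ, ?_⟩
    rintro rfl
    exact hjΓ (hC j σ' τ₀ hσ hτ₀ j hj₀ (Or.inl rfl))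
  | done h j hj => exact ⟨hj, h j hj⟩
  | more _ _ _ _ _ ih1 ih2 k hk =>
    obtain ⟨hk', hkΓ⟩ := ih2 k hk
    exact ⟨(ih1 k hk').1, hkΓ⟩
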